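/- arXiv:1311.5595 — 2 statements merged into one kernel-verified Lean document; each statement's English description precedes it below -/
import Mathlib

section
/- Let λ : ℕ → ℝ with λ_i > 0 for all i, and let a : ℕ → ℝ be such that the series ∑_i |a_i| / λ_i is summable. Then the function t ↦ ∑_i a_i e^{−λ_i t} is integrable on (0, ∞) with respect to Lebesgue measure, and ∫₀^∞ (∑_i a_i e^{−λ_i t}) dt = ∑_i a_i / λ_i. -/
open MeasureTheory

theorem gps_kernel_integral_of_heat_kernel
    (l : ℕ → ℝ) (hl : ∀ i, 0 < l i) (a : ℕ → ℝ)
    (hsum : Summable (fun i => |a i| / l i)) :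
    IntegrableOn (fun t : ℝ => ∑' i : ℕ, a i * Real.exp (-(l i) * t)) (Set.Ioi 0) volume ∧
    ∫ t in Set.Ioi (0 : ℝ), (∑' i : ℕ, a i * Real.exp (-(l i) * t))
      = ∑' i : ℕ, a i / l i := by
  set F : ℕ → ℝ → ℝ := fun i t => a i * Real.exp (-(l i) * t) with hF
  have hInt : ∀ i, IntegrableOn (F i) (Set.Ioi 0) volume := fun i =>
    (exp_neg_integrableOn_Ioi 0 (hl i)).const_mul (a i)
  have hval : ∀ i, (∫ t in Set.Ioi (0:ℝ), Real.exp (-(l i) * t)) = (l i)⁻¹ := by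
    intro i
    have h := integral_comp_mul_left_Ioi (fun x => Real.exp (-x)) 0 (hl i)
    simp only [mul_zero, integral_exp_neg_Ioi, Real.exp_zero, neg_zero, smul_eq_mul,
      mul_one] at h
    simpa [neg_mul] using h
  have hvalF : ∀ i, (∫ t in Set.Ioi (0:ℝ), F i t) = a i / l i := by
    intro i
    rw [hF]
    simp only
    rw [MeasureTheory.integral_const_mul, hval i, div_eq_mul_inv]
  have hnorm : ∀ i, (∫ t in Set.Ioi (0:ℝ), ‖F i t‖) = |a i| / l i := by
    intro i
    have h0 : ∀ t : ℝ, ‖F i t‖ = |a i| * Real.exp (-(l i) * t) := by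
      intro t
      rw [hF]
      simp [abs_mul, abs_of_pos (Real.exp_pos _)]
    simp_rw [h0]
    rw [MeasureTheory.integral_const_mul, hval i, div_eq_mul_inv]
  have hsum' : Summable fun i => ∫ t in Set.Ioi (0:ℝ), ‖F i t‖ := by
    simpa only [hnorm] using hsum
  -- pointwise summability of norms on Ioi 0
  have hptsum : ∀ t : ℝ, t ∈ Set.Ioi (0:ℝ) → Summable fun i => ‖F i t‖ := by
    intro t ht
    have ht : (0:ℝ) < t := ht
    apply Summable.of_nonneg_of_le (fun i => norm_nonneg _)
      (fun i => ?_) (hsum.mul_right t⁻¹)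
    have hpos : 0 < l i * t := mul_pos (hl i) ht
    have h1 : Real.exp (-(l i) * t) ≤ (l i * t)⁻¹ := by
      rw [neg_mul, Real.exp_neg]
      exact inv_anti₀ hpos (le_trans (le_add_of_nonneg_left zero_le_one)
        (by linarith [Real.add_one_le_exp (l i * t)]))
    calc ‖F i t‖ = |a i| * Real.exp (-(l i) * t) := by
          rw [hF]; simp [abs_mul, abs_of_pos (Real.exp_pos _)]
      _ ≤ |a i| * (l i * t)⁻¹ := by
          exact mul_le_mul_of_nonneg_left h1 (abs_nonneg _)
      _ = |a i| / l i * t⁻¹ := by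
          rw [mul_inv, div_eq_mul_inv, mul_assoc]
  have hmeas : AEStronglyMeasurable (fun t : ℝ => ∑' i : ℕ, F i t)
      (volume.restrict (Set.Ioi 0)) := by
    apply aestronglyMeasurable_of_tendsto_ae (u := Filter.atTop)
      (f := fun n (t : ℝ) => ∑ i ∈ Finset.range n, F i t)
    · intro n
      exact (Finset.range n).aestronglyMeasurable_fun_sum fun i _ => ((hInt i).1)
    · filter_upwards [ae_restrict_mem measurableSet_Ioi] with t ht
      exact ((hptsum t ht).of_norm.hasSum.tendsto_sum_nat)
  have hfin : HasFiniteIntegral (fun t : ℝ => ∑' i : ℕ, F i t)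
      (volume.restrict (Set.Ioi 0)) := by
    rw [HasFiniteIntegral]
    have hb : ∫⁻ t in Set.Ioi (0:ℝ), ‖∑' i : ℕ, F i t‖₊
        ≤ ∑' i, ∫⁻ t in Set.Ioi (0:ℝ), ‖F i t‖₊ := by
      erw [← MeasureTheory.lintegral_tsum (fun i => (hInt i).1.enorm)]
      apply lintegral_mono_ae
      filter_upwards [ae_restrict_mem measurableSet_Ioi] with t ht
      calc (‖∑' i : ℕ, F i t‖₊ : ENNReal)
          = ENNReal.ofReal ‖∑' i : ℕ, F i t‖ := (ofReal_norm _).symm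
        _ ≤ ENNReal.ofReal (∑' i : ℕ, ‖F i t‖) :=
            ENNReal.ofReal_le_ofReal (norm_tsum_le_tsum_norm (hptsum t ht))
        _ = ∑' i : ℕ, ENNReal.ofReal ‖F i t‖ :=
            ENNReal.ofReal_tsum_of_nonneg (fun i => norm_nonneg _) (hptsum t ht)
        _ = ∑' i : ℕ, (‖F i t‖₊ : ENNReal) := by
            simp_rw [ofReal_norm, enorm_eq_nnnorm]
    refine lt_of_le_of_lt hb ?_
    have heq : ∀ i, ∫⁻ t in Set.Ioi (0:ℝ), ‖F i t‖₊
        = ENNReal.ofReal (|a i| / l i) := by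
      intro i
      erw [← ofReal_integral_norm_eq_lintegral_enorm (hInt i), hnorm i]
    simp_rw [heq]
    rw [← ENNReal.ofReal_tsum_of_nonneg (fun i => div_nonneg (abs_nonneg _) (hl i).le) hsum]
    exact ENNReal.ofReal_lt_top
  have hI : IntegrableOn (fun t : ℝ => ∑' i : ℕ, F i t) (Set.Ioi 0) volume := ⟨hmeas, hfin⟩
  refine ⟨hI, ?_⟩
  have := MeasureTheory.integral_tsum_of_summable_integral_norm hInt hsum'
  rw [← this]
  simp_rw [hvalF]
end

section
/- Let A, B, C be nonempty types and let D₁ : A → B → ℝ≥0∞, D₂ : B → C → ℝ≥0∞, D₃ : A → C → ℝ≥0∞ be functions such that D₃(a, c) ≤ D₁(a, b) + D₂(b, c) for all a ∈ A, b ∈ B, c ∈ C. Then ⨆_{a} ⨅_{c} D₃(a, c) ≤ (⨆_{a} ⨅_{b} D₁(a, b)) + (⨆_{b} ⨅_{c} D₂(b, c)). -/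
open scoped ENNReal

theorem supInf_triangle
    {A B C : Type*} [Nonempty A] [Nonempty B] [Nonempty C]
    (D₁ : A → B → ℝ≥0∞) (D₂ : B → C → ℝ≥0∞) (D₃ : A → C → ℝ≥0∞)
    (h : ∀ a b c, D₃ a c ≤ D₁ a b + D₂ b c) :
    (⨆ a, ⨅ c, D₃ a c) ≤ (⨆ a, ⨅ b, D₁ a b) + (⨆ b, ⨅ c, D₂ b c) := by
  refine iSup_le fun a => ?_
  calc (⨅ c, D₃ a c) ≤ (⨅ b, D₁ a b + ⨆ b', ⨅ c, D₂ b' c) := by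
        refine le_iInf fun b => ?_
        have : (⨅ c, D₃ a c) ≤ ⨅ c, (D₁ a b + D₂ b c) :=
          iInf_mono fun c => h a b c
        refine this.trans ?_
        rw [← ENNReal.add_iInf]
        gcongr
        exact le_iSup_of_le b le_rfl
    _ = (⨅ b, D₁ a b) + ⨆ b', ⨅ c, D₂ b' c := by
        rw [ENNReal.iInf_add]
    _ ≤ _ := add_le_add (le_iSup_of_le a le_rfl) le_rfl
end
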